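/- arXiv:2602.15801 — 4 statements merged into one kernel-verified Lean document; each statement's English description precedes it below -/
import Mathlib

section
/- Let H be a complex Hilbert space, let A, S : H → H be continuous linear maps with S self-adjoint and A† ∘ S = S ∘ A, and let ħ > 0. Then the pseudo-inner product is conserved under the time evolution generated by A: for every t ∈ ℝ and all ψ, φ ∈ H, ⟨exp(−(i t/ħ)A) ψ, S (exp(−(i t/ħ)A) φ)⟩ = ⟨ψ, S φ⟩, where exp denotes the exponential of a bounded operator. -/
open NormedSpace in
lemma exp_intertwine_aux {H : Type*} [NormedAddCommGroup H] [InnerProductSpace ℂ H]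
    [CompleteSpace H] (a b c : H →L[ℂ] H) (h : a * b = b * c) :
    NormedSpace.exp a * b = b * NormedSpace.exp c := by
  have hpow : ∀ n : ℕ, a ^ n * b = b * c ^ n := by
    intro n
    induction n with
    | zero => simp
    | succ n ih => rw [pow_succ, pow_succ, mul_assoc, h, ← mul_assoc, ih, mul_assoc]
  simp only [exp_eq_tsum ℂ]
  rw [← (expSeries_summable' (𝕂 := ℂ) a).tsum_mul_right b,
      ← (expSeries_summable' (𝕂 := ℂ) c).tsum_mul_left b]
  congr 1
  ext n
  rw [smul_mul_assoc, hpow, mul_smul_comm]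

/-- If `A† ∘ S = S ∘ A` with `S` self-adjoint, then the pseudo-inner
product `⟨ψ, φ⟩_S := ⟨ψ, S φ⟩` is conserved under the time evolution
`exp(−(i t/ħ) A)`. -/
theorem pseudo_inner_conserved_under_time_evolution
    {H : Type*} [NormedAddCommGroup H] [InnerProductSpace ℂ H] [CompleteSpace H]
    (A S : H →L[ℂ] H)
    (hS : IsSelfAdjoint S)
    (hA : (ContinuousLinearMap.adjoint A).comp S = S.comp A)
    (hbar : ℝ) (hhbar : 0 < hbar) :
    ∀ (t : ℝ) (ψ φ : H),
      (inner ℂ (NormedSpace.exp ((-(Complex.I * t / hbar)) • A) ψ)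
             (S (NormedSpace.exp ((-(Complex.I * t / hbar)) • A) φ)) : ℂ)
        = inner ℂ ψ (S φ) := by
  intro t ψ φ
  set c : ℂ := -(Complex.I * t / hbar) with hc
  set U : H →L[ℂ] H := NormedSpace.exp (c • A) with hU
  have hconj : (starRingEnd ℂ) c = -c := by
    rw [hc, map_neg, neg_neg, map_div₀, map_mul, Complex.conj_I, Complex.conj_ofReal,
      Complex.conj_ofReal]
    ring
  have hstarU : star U = NormedSpace.exp ((-c) • A.adjoint) := by
    rw [hU, NormedSpace.star_exp, star_smul, ContinuousLinearMap.star_eq_adjoint,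
      Complex.star_def, hconj]
  have hmul : (-c) • A.adjoint * S = S * ((-c) • A) := by
    have h2 : ContinuousLinearMap.adjoint A * S = S * A := hA
    rw [smul_mul_assoc, mul_smul_comm, h2]
  have hkey : star U * S * U = S := by
    let +nondep : NormedAlgebra ℚ (H →L[ℂ] H) := NormedAlgebra.restrictScalars ℚ ℂ _
    rw [hstarU, exp_intertwine_aux _ _ _ hmul, hU, mul_assoc,
        ← NormedSpace.exp_add_of_commute ((Commute.refl A).smul_left (-c) |>.smul_right c)]
    simp
  calc (inner ℂ (U ψ) (S (U φ)) : ℂ)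
      = inner ℂ ψ ((star U) (S (U φ))) := by
        rw [ContinuousLinearMap.star_eq_adjoint, ContinuousLinearMap.adjoint_inner_right]
    _ = inner ℂ ψ ((star U * S * U) φ) := rfl
    _ = inner ℂ ψ (S φ) := by rw [hkey]
end

section
/- Let τ > 0 and ħ > 0, and let ψ : ℝ → ℂ be continuous with compact support contained in the open interval (−1/τ, 1/τ). Define the deformed Fourier transform F_τψ : ℝ → ℂ by (F_τψ)(ξ) = √(τ√3/π) · ∫_{−1/τ}^{1/τ} ψ(x)/(1 − τx + τ²x²) · exp( −i · (2ξ/(τħ√3)) · ( arctan((2τx−1)/√3) + π/6 ) ) dx. Then Parseval's identity holds: (1/(2ħτ√3)) · ∫_ℝ |(F_τψ)(ξ)|² dξ = ∫_{−1/τ}^{1/τ} |ψ(x)|² / (1 − τx + τ²x²) dx. -/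
open MeasureTheory

open MeasureTheory Set intervalIntegral Real
open scoped ENNReal

namespace DFP

noncomputable def w (τ t : ℝ) : ℝ :=
  (1 + Real.sqrt 3 * Real.tan (max (-(π/3)) (min (π/6) (t - π/6)))) / (2*τ)

noncomputable def phi (τ : ℝ) (ψ : ℝ → ℂ) (t : ℝ) : ℂ := ψ (w τ t)

noncomputable def G (τ : ℝ) (ψ : ℝ → ℂ) (k : ℝ) : ℂ :=
  ∫ t : ℝ, phi τ ψ t * Complex.exp (-Complex.I * k * t)

lemma sqrt3_sq : Real.sqrt 3 ^ 2 = 3 := Real.sq_sqrt (by norm_num)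
lemma sqrt3_pos : 0 < Real.sqrt 3 := Real.sqrt_pos.2 (by norm_num)

lemma clamp_mem (t : ℝ) : max (-(π/3)) (min (π/6) (t - π/6)) ∈ Icc (-(π/3)) (π/6) := by
  constructor
  · exact le_max_left _ _
  · have hπ := Real.pi_pos
    exact max_le (by linarith) (min_le_left _ _)

lemma clamp_eq {t : ℝ} (ht : t ∈ Icc (-(π/6)) (π/3)) :
    max (-(π/3)) (min (π/6) (t - π/6)) = t - π/6 := by
  obtain ⟨h1, h2⟩ := ht
  rw [min_eq_right (by linarith), max_eq_right (by linarith)]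

lemma cos_clamp_ne {x : ℝ} (hx : x ∈ Icc (-(π/3)) (π/6)) : Real.cos x ≠ 0 := by
  have hπ := Real.pi_pos
  refine ne_of_gt (Real.cos_pos_of_mem_Ioo ⟨?_, ?_⟩)
  · linarith [hx.1]
  · linarith [hx.2]

lemma w_continuous (τ : ℝ) : Continuous (w τ) := by
  have hclamp : Continuous fun t : ℝ => max (-(π/3)) (min (π/6) (t - π/6)) := by
    fun_prop
  have htan : Continuous fun t : ℝ => Real.tan (max (-(π/3)) (min (π/6) (t - π/6))) := by
    refine Real.continuousOn_tan.comp_continuous hclamp fun t => ?_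
    exact cos_clamp_ne (clamp_mem t)
  unfold w
  fun_prop

lemma tan_neg_pi_div_three : Real.tan (-(π/3)) = -Real.sqrt 3 := by
  rw [Real.tan_neg, Real.tan_eq_sin_div_cos, Real.sin_pi_div_three, Real.cos_pi_div_three]
  ring

lemma tan_pi_div_six : Real.sqrt 3 * Real.tan (π/6) = 1 := by
  rw [Real.tan_eq_sin_div_cos, Real.sin_pi_div_six, Real.cos_pi_div_six]
  have h := sqrt3_pos
  field_simp
  try ring


lemma w_left {τ t : ℝ} (hτ : τ ≠ 0) (ht : t ≤ -(π/6)) : w τ t = -(1/τ) := by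
  have hπ := Real.pi_pos
  have h1 : min (π/6) (t - π/6) = t - π/6 := min_eq_right (by linarith)
  have h2 : max (-(π/3)) (t - π/6) = -(π/3) := max_eq_left (by linarith)
  rw [w, h1, h2, tan_neg_pi_div_three]
  have h3 : Real.sqrt 3 * -Real.sqrt 3 = -3 := by nlinarith [sqrt3_sq]
  rw [h3]
  field_simp
  try ring

lemma w_right {τ t : ℝ} (hτ : τ ≠ 0) (ht : π/3 ≤ t) : w τ t = 1/τ := by
  have hπ := Real.pi_pos
  have h1 : min (π/6) (t - π/6) = π/6 := min_eq_left (by linarith)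
  have h2 : max (-(π/3)) (π/6) = π/6 := max_eq_right (by linarith)
  rw [w, h1, h2]
  rw [show (1 + Real.sqrt 3 * Real.tan (π/6)) = 2 by rw [tan_pi_div_six]; norm_num]
  field_simp
  try ring

section main

variable {τ : ℝ} {ψ : ℝ → ℂ} (hτ : 0 < τ)
  (hψ : Continuous ψ) (hcsupp : HasCompactSupport ψ)
  (hsupp : tsupport ψ ⊆ Set.Ioo (-(1 / τ)) (1 / τ))

include hsupp in
lemma psi_zero {x : ℝ} (hx : x ∉ Set.Ioo (-(1 / τ)) (1 / τ)) : ψ x = 0 := by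
  by_contra h
  exact hx (hsupp (subset_tsupport ψ h))

include hτ hsupp in
lemma phi_zero {t : ℝ} (ht : t ∉ Set.Ioo (-(π/6)) (π/3)) : phi τ ψ t = 0 := by
  rw [Set.mem_Ioo, not_and_or] at ht
  have hπ := Real.pi_pos
  rcases ht with h | h
  · push_neg at h
    rw [phi, w_left hτ.ne' h]
    exact psi_zero hsupp (fun hc => absurd hc.1 (lt_irrefl _))
  · push_neg at h
    rw [phi, w_right hτ.ne' h]
    exact psi_zero hsupp (fun hc => absurd hc.2 (lt_irrefl _))

include hψ in
lemma phi_continuous : Continuous (phi τ ψ) := hψ.comp (w_continuous τ)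

include hτ hsupp in
lemma phi_compactSupport : HasCompactSupport (phi τ ψ) := by
  refine HasCompactSupport.intro (isCompact_Icc (a := -(π/6)) (b := π/3)) fun t ht => ?_
  exact phi_zero hτ hsupp fun hc => ht ⟨hc.1.le, hc.2.le⟩


lemma pi_ord : -(π/6) ≤ π/3 := by have := Real.pi_pos; linarith

include hτ in
lemma subst {E : Type*} [NormedAddCommGroup E] [NormedSpace ℝ E]
    (g : ℝ → E) (hg : Continuous g) :
    ∫ x in (-(1/τ))..(1/τ), g x
      = ∫ t in (-(π/6))..(π/3),
          (Real.sqrt 3 / (2*τ) * (1 / Real.cos (t - π/6) ^ 2)) • g (w τ t) := by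
  have huIcc : Set.uIcc (-(π/6)) (π/3) = Set.Icc (-(π/6)) (π/3) := Set.uIcc_of_le pi_ord
  set f : ℝ → ℝ := fun t => (1 + Real.sqrt 3 * Real.tan (t - π/6)) / (2*τ) with hf
  set f' : ℝ → ℝ := fun t => Real.sqrt 3 / (2*τ) * (1 / Real.cos (t - π/6) ^ 2) with hf'
  have hmem : ∀ t ∈ Set.uIcc (-(π/6)) (π/3), (t - π/6) ∈ Set.Icc (-(π/3)) (π/6) := by
    intro t ht
    rw [huIcc] at ht
    exact ⟨by linarith [ht.1], by linarith [ht.2]⟩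
  have hderiv : ∀ t ∈ Set.uIcc (-(π/6)) (π/3), HasDerivAt f (f' t) t := by
    intro t ht
    have hcos : Real.cos (t - π/6) ≠ 0 := cos_clamp_ne (hmem t ht)
    have h1 : HasDerivAt (fun t : ℝ => Real.tan (t - π/6)) (1 / Real.cos (t - π/6) ^ 2 * 1) t :=
      by have := (Real.hasDerivAt_tan hcos).comp t ((hasDerivAt_id t).sub_const (π/6)); exact this
    have h2 := ((h1.const_mul (Real.sqrt 3)).const_add 1).div_const (2*τ)
    refine h2.congr_deriv ?_
    simp only [hf']
    ring
  have hcont : ContinuousOn f' (Set.uIcc (-(π/6)) (π/3)) := by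
    rw [hf']
    refine ContinuousOn.mul continuousOn_const ?_
    refine ContinuousOn.div continuousOn_const ?_ ?_
    · fun_prop
    · intro t ht
      exact pow_ne_zero 2 (cos_clamp_ne (hmem t ht))
  have key := intervalIntegral.integral_comp_smul_deriv hderiv hcont hg
  have hfl : f (-(π/6)) = -(1/τ) := by
    rw [hf]
    simp only [show -(π/6) - π/6 = -(π/3) by ring, tan_neg_pi_div_three]
    have h3 : Real.sqrt 3 * -Real.sqrt 3 = -3 := by nlinarith [sqrt3_sq]
    rw [h3]; field_simp; try ring
  have hfr : f (π/3) = 1/τ := by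
    rw [hf]
    simp only [show π/3 - π/6 = π/6 by ring]
    rw [show (1 + Real.sqrt 3 * Real.tan (π/6)) = 2 by rw [tan_pi_div_six]; norm_num]
    field_simp
  rw [hfl, hfr] at key
  rw [← key]
  refine intervalIntegral.integral_congr fun t ht => ?_
  rw [huIcc] at ht
  have : w τ t = f t := by rw [w, clamp_eq ht, hf]
  rw [this]
  rfl


lemma quad_pos (τ x : ℝ) : 0 < 1 - τ * x + τ^2 * x^2 := by
  nlinarith [sq_nonneg (2*τ*x - 1)]

include hτ in
lemma point_id {t : ℝ} (ht : t ∈ Set.Icc (-(π/6)) (π/3)) :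
    (1 - τ * w τ t + τ^2 * (w τ t)^2 = 3/4 * (1 + Real.tan (t - π/6)^2)) ∧
    ((2*τ*(w τ t) - 1)/Real.sqrt 3 = Real.tan (t - π/6)) ∧
    (Real.arctan (Real.tan (t - π/6)) + π/6 = t) := by
  have hw : w τ t = (1 + Real.sqrt 3 * Real.tan (t - π/6)) / (2*τ) := by
    rw [w, clamp_eq ht]
  set y := Real.tan (t - π/6) with hy
  have h3 := sqrt3_sq
  have h3p := sqrt3_pos
  have hπ := Real.pi_pos
  refine ⟨?_, ?_, ?_⟩
  · rw [hw]; field_simp; linear_combination (4*y^2) * h3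
  · rw [hw]; field_simp; ring
  · rw [Real.arctan_tan (by linarith [ht.1]) (by linarith [ht.2])]; ring

include hτ hψ hsupp in
lemma inner_eq (k : ℝ) :
    (∫ x in (-(1/τ))..(1/τ), ψ x / ((1 - τ * x + τ^2 * x^2 : ℝ) : ℂ) *
        Complex.exp (-Complex.I * (k:ℂ) *
          ((Real.arctan ((2*τ*x - 1)/Real.sqrt 3) + π/6 : ℝ) : ℂ)))
      = ((2/(τ*Real.sqrt 3) : ℝ) : ℂ) * G τ ψ k := by
  have hg : Continuous fun x : ℝ => ψ x / ((1 - τ * x + τ^2 * x^2 : ℝ) : ℂ) *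
      Complex.exp (-Complex.I * (k:ℂ) *
        ((Real.arctan ((2*τ*x - 1)/Real.sqrt 3) + π/6 : ℝ) : ℂ)) := by
    have harc : Continuous fun x : ℝ => Real.arctan ((2*τ*x - 1)/Real.sqrt 3) :=
      Real.continuous_arctan.comp (by fun_prop)
    have hexp : Continuous fun x : ℝ => Complex.exp (-Complex.I * (k:ℂ) *
        ((Real.arctan ((2*τ*x - 1)/Real.sqrt 3) + π/6 : ℝ) : ℂ)) :=
      Complex.continuous_exp.comp (continuous_const.mul
        (Complex.continuous_ofReal.comp (harc.add continuous_const)))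
    refine Continuous.mul (Continuous.div hψ (by fun_prop) fun x => ?_) hexp
    exact Complex.ofReal_ne_zero.2 (quad_pos τ x).ne'
  rw [subst hτ _ hg]
  have hpt : ∀ t ∈ Set.uIcc (-(π/6)) (π/3),
      (Real.sqrt 3 / (2*τ) * (1 / Real.cos (t - π/6) ^ 2)) •
        (ψ (w τ t) / ((1 - τ * (w τ t) + τ^2 * (w τ t)^2 : ℝ) : ℂ) *
          Complex.exp (-Complex.I * (k:ℂ) *
            ((Real.arctan ((2*τ*(w τ t) - 1)/Real.sqrt 3) + π/6 : ℝ) : ℂ)))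
      = ((2/(τ*Real.sqrt 3) : ℝ) : ℂ) * (phi τ ψ t * Complex.exp (-Complex.I * (k:ℂ) * (t:ℂ))) := by
    intro t ht
    rw [Set.uIcc_of_le pi_ord] at ht
    obtain ⟨h1, h2, h3⟩ := point_id hτ ht
    have hcos : Real.cos (t - π/6) ≠ 0 :=
      cos_clamp_ne ⟨by linarith [ht.1, Real.pi_pos], by linarith [ht.2, Real.pi_pos]⟩
    have hsec : 1 / Real.cos (t - π/6) ^ 2 = 1 + Real.tan (t - π/6) ^ 2 := by
      rw [one_div, ← Real.inv_one_add_tan_sq hcos, inv_inv]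
    rw [h1, h2, h3, hsec, phi]
    set y := Real.tan (t - π/6) with hy
    have hyp : (0:ℝ) < 1 + y^2 := by positivity
    have hsc : (Real.sqrt 3 / (2*τ) * (1 + y ^ 2)) / (3/4 * (1 + y^2)) = 2/(τ*Real.sqrt 3) := by
      have h3 := sqrt3_sq
      have h3p := sqrt3_pos
      field_simp
      linear_combination 4 * h3
    rw [Complex.real_smul, ← hsc, Complex.ofReal_div]
    have hr2 : ((3/4 * (1 + y^2) : ℝ) : ℂ) ≠ 0 := Complex.ofReal_ne_zero.2 (by positivity)
    field_simp
    try ring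
  rw [intervalIntegral.integral_congr hpt, intervalIntegral.integral_const_mul]
  congr 1
  rw [G, intervalIntegral.integral_eq_integral_of_support_subset]
  intro t ht
  have : phi τ ψ t ≠ 0 := by
    intro h0
    simp [Function.mem_support, h0] at ht
  by_contra hmem
  exact this (phi_zero hτ hsupp fun hc => hmem ⟨hc.1, hc.2.le⟩)


include hτ hψ hsupp in
lemma rhs_eq :
    (∫ x in (-(1/τ))..(1/τ), ‖ψ x‖^2 / (1 - τ * x + τ^2 * x^2))
      = (2/(τ*Real.sqrt 3)) * ∫ t : ℝ, ‖phi τ ψ t‖^2 := by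
  have hg : Continuous fun x : ℝ => ‖ψ x‖^2 / (1 - τ * x + τ^2 * x^2) :=
    Continuous.div (by fun_prop) (by fun_prop) fun x => (quad_pos τ x).ne'
  rw [subst hτ _ hg]
  have hpt : ∀ t ∈ Set.uIcc (-(π/6)) (π/3),
      (Real.sqrt 3 / (2*τ) * (1 / Real.cos (t - π/6) ^ 2)) •
        (‖ψ (w τ t)‖^2 / (1 - τ * (w τ t) + τ^2 * (w τ t)^2))
      = (2/(τ*Real.sqrt 3)) * ‖phi τ ψ t‖^2 := by
    intro t ht
    rw [Set.uIcc_of_le pi_ord] at ht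
    obtain ⟨h1, _, _⟩ := point_id hτ ht
    have hcos : Real.cos (t - π/6) ≠ 0 :=
      cos_clamp_ne ⟨by linarith [ht.1, Real.pi_pos], by linarith [ht.2, Real.pi_pos]⟩
    have hsec : 1 / Real.cos (t - π/6) ^ 2 = 1 + Real.tan (t - π/6) ^ 2 := by
      rw [one_div, ← Real.inv_one_add_tan_sq hcos, inv_inv]
    rw [h1, hsec, phi, smul_eq_mul]
    set y := Real.tan (t - π/6) with hy
    have hyp : (0:ℝ) < 1 + y^2 := by positivity
    have h3 := sqrt3_sq
    have h3p := sqrt3_pos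
    rw [mul_div_assoc']
    rw [show Real.sqrt 3 / (2*τ) * (1 + y ^ 2) * ‖ψ (w τ t)‖^2
      = ‖ψ (w τ t)‖^2 * (Real.sqrt 3 / (2*τ) * (1 + y ^ 2)) by ring]
    rw [mul_div_assoc, mul_comm]
    congr 1
    field_simp
    linear_combination 4 * h3
  rw [intervalIntegral.integral_congr hpt, intervalIntegral.integral_const_mul]
  congr 1
  rw [intervalIntegral.integral_eq_integral_of_support_subset]
  intro t ht
  have hne : phi τ ψ t ≠ 0 := by
    intro h0
    simp [Function.mem_support, h0] at ht
  by_contra hmem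
  exact hne (phi_zero hτ hsupp fun hc => hmem ⟨hc.1, hc.2.le⟩)


lemma exp_norm_one (a b : ℝ) : ‖Complex.exp (-Complex.I * (a:ℂ) * (b:ℂ))‖ = 1 := by
  rw [Complex.norm_exp]
  have : (-Complex.I * (a:ℂ) * (b:ℂ)).re = 0 := by simp
  rw [this, Real.exp_zero]

include hτ hψ hsupp in
lemma parseval_s (s : ℝ) :
    Summable (fun n : ℤ => ‖G τ ψ (s + (n:ℝ))‖^2) ∧
    ∑' n : ℤ, ‖G τ ψ (s + (n:ℝ))‖^2 = (2*π) * ∫ t : ℝ, ‖phi τ ψ t‖^2 := by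
  have hπ := Real.pi_pos
  haveI hT : Fact (0 < 2*π) := ⟨by linarith⟩
  set φs : ℝ → ℂ := fun t => phi τ ψ t * Complex.exp (-Complex.I * (s:ℂ) * (t:ℂ)) with hφs
  have hφscont : Continuous φs := (phi_continuous hψ).mul (by fun_prop)
  have hzero : ∀ t : ℝ, t ∉ Set.Ioo (-(π/6)) (π/3) → φs t = 0 := by
    intro t ht
    rw [hφs]
    simp [phi_zero hτ hsupp ht]
  have hends : φs (-π) = φs (-π + 2*π) := by
    rw [hzero _ (fun hc => by linarith [hc.1]), hzero _ (fun hc => by linarith [hc.2])]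
  set F : C(AddCircle (2*π), ℂ) :=
    ⟨AddCircle.liftIco (2*π) (-π) φs, AddCircle.liftIco_continuous hends hφscont.continuousOn⟩
    with hF
  have hcoeff : ∀ n : ℤ, fourierCoeff (F : AddCircle (2*π) → ℂ) n
      = (1/(2*π) : ℝ) • G τ ψ (s + (n:ℝ)) := by
    intro n
    have h1 : (F : AddCircle (2*π) → ℂ) = AddCircle.liftIco (2*π) (-π) φs := rfl
    rw [h1, fourierCoeff_liftIco_eq, fourierCoeffOn_eq_integral]
    have hint : Set.EqOn (fun x : ℝ => fourier (-n) (x : AddCircle (-π + 2*π - -π)) • φs x)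
        (fun x : ℝ => phi τ ψ x * Complex.exp (-Complex.I * ((s + (n:ℝ) : ℝ):ℂ) * (x:ℂ)))
        (Set.uIcc (-π) (-π + 2*π)) := by
      intro x _
      have key : ∀ (A B p : ℂ), Complex.exp A * (p * Complex.exp B) = p * Complex.exp (A + B) := by
        intro A B p
        rw [Complex.exp_add]
        ring
      simp only [fourier_coe_apply, hφs, smul_eq_mul]
      rw [key]
      have hπ' : (π:ℂ) ≠ 0 := Complex.ofReal_ne_zero.2 Real.pi_ne_zero
      congr 1
      congr 1
      push_cast
      field_simp
      ring
    rw [intervalIntegral.integral_congr hint,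
      intervalIntegral.integral_eq_integral_of_support_subset (by
        intro t ht
        have hne : phi τ ψ t ≠ 0 := by
          intro h0
          simp [Function.mem_support, h0] at ht
        by_contra hmem
        refine hne (phi_zero hτ hsupp fun hc => hmem ⟨by linarith [hc.1], by linarith [hc.2]⟩))]
    rw [show (-π + 2*π - -π) = 2*π by ring]
    rfl
  -- Parseval on the circle
  set Flp := ContinuousMap.toLp (E := ℂ) 2 AddCircle.haarAddCircle ℂ F with hFlp
  have hpars := tsum_sq_fourierCoeff Flp
  have hcoeff2 : ∀ n : ℤ, fourierCoeff (Flp : AddCircle (2*π) → ℂ) n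
      = (1/(2*π) : ℝ) • G τ ψ (s + (n:ℝ)) := by
    intro n
    rw [hFlp, fourierCoeff_toLp, hcoeff]
  -- RHS of circle Parseval
  have hR : (∫ t : AddCircle (2*π), ‖(Flp : AddCircle (2*π) → ℂ) t‖^2 ∂AddCircle.haarAddCircle)
      = (1/(2*π)) * ∫ t : ℝ, ‖phi τ ψ t‖^2 := by
    have e1 : (∫ t : AddCircle (2*π), ‖(Flp : AddCircle (2*π) → ℂ) t‖^2 ∂AddCircle.haarAddCircle)
        = ∫ t : AddCircle (2*π), ‖(F : AddCircle (2*π) → ℂ) t‖^2 ∂AddCircle.haarAddCircle := by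
      refine integral_congr_ae ?_
      filter_upwards [ContinuousMap.coeFn_toLp (p := 2) AddCircle.haarAddCircle (𝕜 := ℂ) F]
        with t ht
      rw [hFlp, ht]
    have e2 : (∫ t : AddCircle (2*π), ‖(F : AddCircle (2*π) → ℂ) t‖^2 ∂(volume : Measure (AddCircle (2*π))))
        = (2*π) * ∫ t : AddCircle (2*π), ‖(F : AddCircle (2*π) → ℂ) t‖^2 ∂AddCircle.haarAddCircle := by
      rw [AddCircle.volume_eq_smul_haarAddCircle, MeasureTheory.integral_smul_measure,
        ENNReal.toReal_ofReal (by linarith), smul_eq_mul]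
    have e3 : (∫ t : AddCircle (2*π), ‖(F : AddCircle (2*π) → ℂ) t‖^2 ∂(volume : Measure (AddCircle (2*π))))
        = ∫ x in (-π)..(-π + 2*π), ‖(F : AddCircle (2*π) → ℂ) (x : AddCircle (2*π))‖^2 :=
      (AddCircle.intervalIntegral_preimage (2*π) (-π)
        (fun z : AddCircle (2*π) => ‖(F : AddCircle (2*π) → ℂ) z‖^2)).symm
    have hae : ∀ᵐ x : ℝ, x ≠ (-π + 2*π) := by
      rw [Filter.eventually_iff, mem_ae_iff]
      have : {x : ℝ | x ≠ (-π + 2*π)}ᶜ = {(-π + 2*π)} := by ext x; simp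
      rw [this]
      exact measure_singleton _
    have e4 : (∫ x in (-π)..(-π + 2*π), ‖(F : AddCircle (2*π) → ℂ) (x : AddCircle (2*π))‖^2)
        = ∫ x in (-π)..(-π + 2*π), ‖phi τ ψ x‖^2 := by
      refine intervalIntegral.integral_congr_ae ?_
      filter_upwards [hae] with x hx hx2
      rw [Set.uIoc_of_le (by linarith)] at hx2
      have hxIco : x ∈ Set.Ico (-π) (-π + 2*π) := ⟨hx2.1.le, lt_of_le_of_ne hx2.2 hx⟩
      rw [show (F : AddCircle (2*π) → ℂ) = AddCircle.liftIco (2*π) (-π) φs from rfl,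
        AddCircle.liftIco_coe_apply hxIco, hφs]
      simp only [norm_mul, exp_norm_one, mul_one]
    have e5 : (∫ x in (-π)..(-π + 2*π), ‖phi τ ψ x‖^2) = ∫ t : ℝ, ‖phi τ ψ t‖^2 := by
      refine intervalIntegral.integral_eq_integral_of_support_subset ?_
      intro t ht
      have hne : phi τ ψ t ≠ 0 := by
        intro h0
        simp [Function.mem_support, h0] at ht
      by_contra hmem
      exact hne (phi_zero hτ hsupp fun hc => hmem ⟨by linarith [hc.1], by linarith [hc.2]⟩)
    rw [e1]
    have heq := e2.symm.trans (e3.trans (e4.trans e5))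
    rw [← heq]
    field_simp
  -- summability
  have h2r : ((2:ℝ≥0∞)).toReal = 2 := by norm_num
  have hsum0 : Summable fun n : ℤ => ‖fourierCoeff (Flp : AddCircle (2*π) → ℂ) n‖ ^ 2 := by
    have hm := (lp.memℓp (fourierBasis.repr Flp)).summable (by rw [h2r]; norm_num)
    refine hm.congr fun n => ?_
    rw [fourierBasis_repr, h2r, ← Real.rpow_natCast ‖fourierCoeff (Flp : AddCircle (2*π) → ℂ) n‖ 2]
    norm_num
  have hGsq : ∀ n : ℤ, ‖G τ ψ (s + (n:ℝ))‖^2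
      = (2*π)^2 * ‖fourierCoeff (Flp : AddCircle (2*π) → ℂ) n‖^2 := by
    intro n
    rw [hcoeff2, norm_smul, mul_pow, Real.norm_eq_abs, abs_of_pos (by positivity)]
    field_simp
  constructor
  · exact Summable.congr (hsum0.mul_left ((2*π)^2)) fun n => (hGsq n).symm
  · calc ∑' n : ℤ, ‖G τ ψ (s + (n:ℝ))‖^2
        = ∑' n : ℤ, (2*π)^2 * ‖fourierCoeff (Flp : AddCircle (2*π) → ℂ) n‖^2 := by
          exact tsum_congr hGsq
      _ = (2*π)^2 * ∑' n : ℤ, ‖fourierCoeff (Flp : AddCircle (2*π) → ℂ) n‖^2 := tsum_mul_left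
      _ = (2*π)^2 * ((1/(2*π)) * ∫ t : ℝ, ‖phi τ ψ t‖^2) := by rw [hpars, hR]
      _ = (2*π) * ∫ t : ℝ, ‖phi τ ψ t‖^2 := by field_simp


include hτ hψ hsupp in
lemma G_cont : Continuous (G τ ψ) := by
  have hphi := phi_continuous (τ := τ) hψ
  have hb : Integrable (fun t : ℝ => ‖phi τ ψ t‖) :=
    hphi.norm.integrable_of_hasCompactSupport (phi_compactSupport hτ hsupp).norm
  refine continuous_of_dominated
    (F := fun (k : ℝ) (t : ℝ) => phi τ ψ t * Complex.exp (-Complex.I * (k:ℂ) * (t:ℂ)))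
    (bound := fun t => ‖phi τ ψ t‖) ?_ ?_ hb ?_
  · intro k
    exact (hphi.mul (by fun_prop)).aestronglyMeasurable
  · intro k
    filter_upwards with t
    exact le_of_eq (by rw [norm_mul, exp_norm_one, mul_one])
  · filter_upwards with t
    fun_prop

include hτ hψ hsupp in
lemma plancherel :
    Integrable (fun k : ℝ => ‖G τ ψ k‖^2) ∧
    (∫ k : ℝ, ‖G τ ψ k‖^2) = (2*π) * ∫ t : ℝ, ‖phi τ ψ t‖^2 := by
  have hπ := Real.pi_pos
  have hGc := G_cont hτ hψ hsupp
  have hI0nn : (0:ℝ) ≤ ∫ t : ℝ, ‖phi τ ψ t‖^2 := integral_nonneg fun t => by positivity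
  set I0 : ℝ := ∫ t : ℝ, ‖phi τ ψ t‖^2 with hI0
  set g : ℝ → ℝ≥0∞ := fun k => ENNReal.ofReal (‖G τ ψ k‖^2) with hg
  have hsqc : Continuous fun k : ℝ => ‖G τ ψ k‖^2 := by fun_prop
  have hgm : Measurable g := hsqc.measurable.ennreal_ofReal
  have hcover : (⋃ n : ℤ, Set.Ioc ((n:ℝ)) ((n:ℝ)+1)) = Set.univ := by
    ext x
    simp only [Set.mem_iUnion, Set.mem_Ioc, Set.mem_univ, iff_true]
    refine ⟨⌈x⌉ - 1, ?_, ?_⟩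
    · push_cast
      linarith [Int.ceil_lt_add_one x]
    · push_cast
      linarith [Int.le_ceil x]
  have hdisj : Pairwise (Function.onFun Disjoint fun n : ℤ => Set.Ioc ((n:ℝ)) ((n:ℝ)+1)) := by
    intro m n hmn
    have key : ∀ a b : ℤ, a < b →
        Disjoint (Set.Ioc ((a:ℝ)) ((a:ℝ)+1)) (Set.Ioc ((b:ℝ)) ((b:ℝ)+1)) := by
      intro a b hab
      have h1 : ((a:ℝ)) + 1 ≤ (b:ℝ) := by
        have := Int.add_one_le_iff.2 hab
        exact_mod_cast this
      refine Set.disjoint_left.2 fun x hx hx' => ?_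
      linarith [hx.2, hx'.1]
    rcases lt_or_gt_of_ne hmn with h | h
    · exact key m n h
    · exact (key n m h).symm
  have h1 : (∫⁻ k, g k) = ∑' n : ℤ, ∫⁻ k in Set.Ioc ((n:ℝ)) ((n:ℝ)+1), g k := by
    rw [← lintegral_iUnion (fun n => measurableSet_Ioc) hdisj g, hcover, Measure.restrict_univ]
  have h2 : ∀ n : ℤ, (∫⁻ k in Set.Ioc ((n:ℝ)) ((n:ℝ)+1), g k)
      = ∫⁻ s in Set.Ioc (0:ℝ) 1, g (s + (n:ℝ)) := by
    intro n
    rw [← lintegral_indicator measurableSet_Ioc g, ← lintegral_indicator measurableSet_Ioc _]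
    rw [← lintegral_add_right_eq_self
      (fun k => (Set.Ioc ((n:ℝ)) ((n:ℝ)+1)).indicator g k) ((n:ℝ))]
    congr 1
    funext s
    by_cases hs : s ∈ Set.Ioc (0:ℝ) 1
    · rw [Set.indicator_of_mem (show s + (n:ℝ) ∈ Set.Ioc ((n:ℝ)) ((n:ℝ)+1) from
        ⟨by linarith [hs.1], by linarith [hs.2]⟩), Set.indicator_of_mem hs]
    · rw [Set.indicator_of_notMem (show s + (n:ℝ) ∉ Set.Ioc ((n:ℝ)) ((n:ℝ)+1) from
        fun hc => hs ⟨by linarith [hc.1], by linarith [hc.2]⟩), Set.indicator_of_notMem hs]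
  have h3 : ∀ s : ℝ, (∑' n : ℤ, g (s + (n:ℝ))) = ENNReal.ofReal ((2*π) * I0) := by
    intro s
    obtain ⟨hsum, hval⟩ := parseval_s hτ hψ hsupp s
    rw [hg]
    rw [← ENNReal.ofReal_tsum_of_nonneg (fun n => by positivity) hsum, hval]
  have h4 : (∑' n : ℤ, ∫⁻ s in Set.Ioc (0:ℝ) 1, g (s + (n:ℝ)))
      = ∫⁻ s in Set.Ioc (0:ℝ) 1, ∑' n : ℤ, g (s + (n:ℝ)) := by
    exact (lintegral_tsum (μ := volume.restrict (Set.Ioc (0:ℝ) 1))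
      (f := fun (n : ℤ) (s : ℝ) => g (s + (n:ℝ)))
      fun n => (hgm.comp (measurable_add_const ((n:ℝ)))).aemeasurable).symm
  have hlin : (∫⁻ k, g k) = ENNReal.ofReal ((2*π) * I0) := by
    rw [h1]
    simp_rw [h2]
    rw [h4]
    have : ∀ᵐ s ∂(volume.restrict (Set.Ioc (0:ℝ) 1)), (∑' n : ℤ, g (s + (n:ℝ)))
        = ENNReal.ofReal ((2*π) * I0) := Filter.Eventually.of_forall fun s => h3 s
    rw [lintegral_congr_ae this, setLIntegral_const, Real.volume_Ioc]
    norm_num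
  have hfin : Integrable (fun k : ℝ => ‖G τ ψ k‖^2) := by
    refine ⟨hsqc.aestronglyMeasurable, ?_⟩
    rw [hasFiniteIntegral_iff_ofReal (Filter.Eventually.of_forall fun k => by positivity)]
    rw [show (fun k : ℝ => ENNReal.ofReal (‖G τ ψ k‖^2)) = g from rfl] at *
    rw [hlin]
    exact ENNReal.ofReal_lt_top
  refine ⟨hfin, ?_⟩
  rw [integral_eq_lintegral_of_nonneg_ae (Filter.Eventually.of_forall fun k => by positivity)
    hsqc.aestronglyMeasurable]
  rw [show (fun k : ℝ => ENNReal.ofReal (‖G τ ψ k‖^2)) = g from rfl, hlin,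
    ENNReal.toReal_ofReal (by positivity)]

end main

end DFP


/-- Parseval's identity for the deformed Fourier transform
`(F_τψ)(ξ) = √(τ√3/π) ∫_{−1/τ}^{1/τ} ψ(x) f(x)⁻¹ exp(−i(2ξ/(τħ√3))(arctan((2τx−1)/√3)+π/6)) dx`:
`(1/(2ħτ√3)) ∫_ℝ |(F_τψ)(ξ)|² dξ = ∫_{−1/τ}^{1/τ} |ψ(x)|²/f(x) dx`. -/
theorem deformed_fourier_parseval (τ hbar : ℝ) (hτ : 0 < τ) (hhbar : 0 < hbar)
    (ψ : ℝ → ℂ) (hψ : Continuous ψ) (hcsupp : HasCompactSupport ψ)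
    (hsupp : tsupport ψ ⊆ Set.Ioo (-(1 / τ)) (1 / τ)) :
    (1 / (2 * hbar * τ * Real.sqrt 3)) *
        ∫ ξ : ℝ,
          ‖(Real.sqrt (τ * Real.sqrt 3 / Real.pi) : ℂ) *
              ∫ x in (-(1 / τ))..(1 / τ),
                ψ x / ((1 - τ * x + τ ^ 2 * x ^ 2 : ℝ) : ℂ) *
                  Complex.exp (-Complex.I * (2 * ξ / (τ * hbar * Real.sqrt 3) : ℝ) *
                    ((Real.arctan ((2 * τ * x - 1) / Real.sqrt 3) + Real.pi / 6 : ℝ) : ℂ))‖ ^ 2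
      = ∫ x in (-(1 / τ))..(1 / τ), ‖ψ x‖ ^ 2 / (1 - τ * x + τ ^ 2 * x ^ 2) := by
  have h3p := DFP.sqrt3_pos
  have h3 := DFP.sqrt3_sq
  have hπ := Real.pi_pos
  obtain ⟨hint, hval⟩ := DFP.plancherel hτ hψ hsupp
  set A : ℝ := Real.sqrt (τ * Real.sqrt 3 / Real.pi) with hA
  have hA2 : A^2 = τ * Real.sqrt 3 / Real.pi := Real.sq_sqrt (by positivity)
  set a : ℝ := 2 / (τ * hbar * Real.sqrt 3) with ha
  have hapos : 0 < a := by rw [ha]; positivity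
  have hptw : ∀ ξ : ℝ,
      ‖(A : ℂ) * ∫ x in (-(1 / τ))..(1 / τ), ψ x / ((1 - τ * x + τ ^ 2 * x ^ 2 : ℝ) : ℂ) *
          Complex.exp (-Complex.I * (2 * ξ / (τ * hbar * Real.sqrt 3) : ℝ) *
            ((Real.arctan ((2 * τ * x - 1) / Real.sqrt 3) + Real.pi / 6 : ℝ) : ℂ))‖ ^ 2
      = (A^2 * (2/(τ*Real.sqrt 3))^2) * ‖DFP.G τ ψ (a * ξ)‖^2 := by
    intro ξ
    rw [show (2 * ξ / (τ * hbar * Real.sqrt 3)) = a * ξ by rw [ha]; ring]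
    rw [DFP.inner_eq hτ hψ hsupp (a * ξ)]
    rw [norm_mul, norm_mul, Complex.norm_real, Complex.norm_real, Real.norm_eq_abs,
      Real.norm_eq_abs, abs_of_pos (show (0:ℝ) < A by rw [hA]; positivity),
      abs_of_pos (by positivity : (0:ℝ) < 2/(τ*Real.sqrt 3))]
    ring
  simp only [hptw]
  rw [MeasureTheory.integral_const_mul]
  rw [MeasureTheory.Measure.integral_comp_mul_left (fun k => ‖DFP.G τ ψ k‖^2) a, hval]
  rw [DFP.rhs_eq hτ hψ hsupp]
  rw [abs_of_pos (inv_pos.2 hapos), smul_eq_mul, hA2, ha]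
  have hss : Real.sqrt 3 * Real.sqrt 3 = 3 := by nlinarith
  field_simp
end

section
/- Let τ > 0, ħ > 0, m > 0 and k ∈ ℝ, and define φ_k : ℝ → ℝ by φ_k(y) = √(τ√3/π) · sin( (2k/(τ√3)) · ( arctan((2τy − 1)/√3) + π/6 ) ). Then φ_k solves the deformed free Schrödinger equation: for every y ∈ ℝ, −(ħ²/(2m)) · (1 − τy + τ²y²) · d/dy [ (1 − τy + τ²y²) · φ_k′(y) ] = (ħ²k²/(2m)) · φ_k(y). -/
private lemma f_pos (τ y : ℝ) (hτ : 0 < τ) : 0 < 1 - τ * y + τ ^ 2 * y ^ 2 := by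
  nlinarith [sq_nonneg (2 * τ * y - 1), sq_nonneg (τ*y)]

private lemma arctan_deriv (τ : ℝ) (hτ : 0 < τ) (y : ℝ) :
    HasDerivAt (fun y : ℝ => Real.arctan ((2 * τ * y - 1) / Real.sqrt 3))
      (τ * Real.sqrt 3 / (2 * (1 - τ * y + τ ^ 2 * y ^ 2))) y := by
  have hs : (0:ℝ) < Real.sqrt 3 := Real.sqrt_pos.mpr (by norm_num)
  have hs3 : (Real.sqrt 3) ^ 2 = 3 := Real.sq_sqrt (by norm_num)
  have h1 : HasDerivAt (fun y : ℝ => (2 * τ * y - 1) / Real.sqrt 3)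
      (2 * τ / Real.sqrt 3) y := by
    have := (((hasDerivAt_id y).const_mul (2 * τ)).sub_const 1).div_const (Real.sqrt 3)
    simpa using this
  have h2 := (Real.hasDerivAt_arctan ((2 * τ * y - 1) / Real.sqrt 3)).comp y h1
  refine h2.congr_deriv (Eq.symm ?_)
  have hf := f_pos τ y hτ
  have hden : 1 + ((2 * τ * y - 1) / Real.sqrt 3) ^ 2 ≠ 0 := by positivity
  field_simp
  linear_combination hs3

private lemma theta_deriv (τ k : ℝ) (hτ : 0 < τ) (y : ℝ) :
    HasDerivAt (fun y : ℝ => (2 * k / (τ * Real.sqrt 3)) *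
        (Real.arctan ((2 * τ * y - 1) / Real.sqrt 3) + Real.pi / 6))
      (k / (1 - τ * y + τ ^ 2 * y ^ 2)) y := by
  have hs : (0:ℝ) < Real.sqrt 3 := Real.sqrt_pos.mpr (by norm_num)
  have h := (((arctan_deriv τ hτ y).add_const (Real.pi / 6)).const_mul
    (2 * k / (τ * Real.sqrt 3)))
  refine h.congr_deriv (Eq.symm ?_)
  have hf := (f_pos τ y hτ).ne'
  field_simp

/-- The function
`φ_k(y) = √(τ√3/π) sin((2k/(τ√3))(arctan((2τy−1)/√3) + π/6))`
solves the deformed free Schrödinger equation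
`−(ħ²/(2m)) f(y) d/dy (f(y) φ_k′(y)) = (ħ²k²/(2m)) φ_k(y)` with `f(y) = 1 − τy + τ²y²`. -/
theorem deformed_free_schrodinger_solution (τ hbar m k : ℝ)
    (hτ : 0 < τ) (hhbar : 0 < hbar) (hm : 0 < m) :
    ∀ y : ℝ,
      -(hbar ^ 2 / (2 * m)) * (1 - τ * y + τ ^ 2 * y ^ 2) *
          deriv (fun y : ℝ =>
            (1 - τ * y + τ ^ 2 * y ^ 2) *
              deriv (fun y : ℝ =>
                Real.sqrt (τ * Real.sqrt 3 / Real.pi) *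
                  Real.sin ((2 * k / (τ * Real.sqrt 3)) *
                    (Real.arctan ((2 * τ * y - 1) / Real.sqrt 3) + Real.pi / 6))) y) y
        = (hbar ^ 2 * k ^ 2 / (2 * m)) *
            (Real.sqrt (τ * Real.sqrt 3 / Real.pi) *
              Real.sin ((2 * k / (τ * Real.sqrt 3)) *
                (Real.arctan ((2 * τ * y - 1) / Real.sqrt 3) + Real.pi / 6))) := by
  intro y
  set C := Real.sqrt (τ * Real.sqrt 3 / Real.pi) with hC
  set θ : ℝ → ℝ := fun y => (2 * k / (τ * Real.sqrt 3)) *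
      (Real.arctan ((2 * τ * y - 1) / Real.sqrt 3) + Real.pi / 6) with hθ
  -- derivative of inner function at any point z
  have hinner : ∀ z : ℝ,
      deriv (fun y : ℝ => C * Real.sin (θ y)) z
        = C * Real.cos (θ z) * (k / (1 - τ * z + τ ^ 2 * z ^ 2)) := by
    intro z
    have h := (((theta_deriv τ k hτ z).sin).const_mul C)
    have := h.deriv
    rw [this]; ring
  -- the function f * deriv inner equals C*k*cos∘θ everywhere
  have hfun : (fun y : ℝ => (1 - τ * y + τ ^ 2 * y ^ 2) *
        deriv (fun y : ℝ => C * Real.sin (θ y)) y)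
      = fun y : ℝ => C * k * Real.cos (θ y) := by
    funext z
    rw [hinner z]
    have hf := (f_pos τ z hτ).ne'
    field_simp
  have houter : HasDerivAt (fun y : ℝ => C * k * Real.cos (θ y))
      (C * k * (-Real.sin (θ y) * (k / (1 - τ * y + τ ^ 2 * y ^ 2)))) y :=
    ((theta_deriv τ k hτ y).cos).const_mul (C * k)
  rw [show (fun y : ℝ =>
        (1 - τ * y + τ ^ 2 * y ^ 2) *
          deriv (fun y : ℝ =>
            C * Real.sin ((2 * k / (τ * Real.sqrt 3)) *
              (Real.arctan ((2 * τ * y - 1) / Real.sqrt 3) + Real.pi / 6))) y)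
      = fun y : ℝ => C * k * Real.cos (θ y) from hfun]
  rw [houter.deriv]
  have hf := (f_pos τ y hτ).ne'
  field_simp
  simp only [hθ]
  ring_nf
end

section
/- Let τ > 0, a > 0 with τa ≤ 1 (i.e. a ≤ ℓ_max = 1/τ), let ħ > 0, m > 0 and let n be a positive integer. Then the deformed energy level is bounded by the undeformed one: 3 n² π² τ² ħ² / ( 8 m ( arctan((2τa − 1)/√3) + π/6 )² ) ≤ n² π² ħ² / (2 m a²); equivalently E_n^y = (3/4) ( τa / ( arctan((2τa−1)/√3) + π/6 ) )² E_n^x ≤ E_n^x, so the position deformation lowers the energy levels of a particle in a box. -/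
lemma arctan_inv_sqrt3 : Real.arctan (Real.sqrt 3)⁻¹ = Real.pi / 6 := by
  have h := Real.arctan_tan (x := Real.pi / 6)
    (by linarith [Real.pi_pos]) (by linarith [Real.pi_pos])
  rwa [Real.tan_pi_div_six, one_div] at h

lemma arctan_tangent_bound (x : ℝ) (h1 : -(Real.sqrt 3)⁻¹ ≤ x)
    (h2 : x ≤ (Real.sqrt 3)⁻¹) :
    3 / 4 * x + Real.sqrt 3 / 4 - Real.pi / 6 ≤ Real.arctan x := by
  have hs3 : Real.sqrt 3 ^ 2 = 3 := Real.sq_sqrt (by norm_num)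
  have hs3pos : 0 < Real.sqrt 3 := Real.sqrt_pos.mpr (by norm_num)
  set f : ℝ → ℝ := fun y => Real.arctan y - 3 / 4 * y with hf
  have hmono : MonotoneOn f (Set.Icc (-(Real.sqrt 3)⁻¹) ((Real.sqrt 3)⁻¹)) := by
    apply monotoneOn_of_deriv_nonneg (convex_Icc _ _)
    · exact (Real.continuous_arctan.sub (continuous_const.mul continuous_id)).continuousOn
    · intro y hy
      exact ((Real.differentiableAt_arctan y).sub
        ((differentiableAt_const _).mul differentiableAt_id)).differentiableWithinAt
    · intro y hy
      rw [interior_Icc] at hy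
      have hd : deriv f y = 1 / (1 + y ^ 2) - 3 / 4 := by
        have := ((Real.hasDerivAt_arctan y).sub
          ((hasDerivAt_id y).const_mul (3 / 4 : ℝ))).deriv
        exact this.trans (by ring)
      rw [hd]
      have hy2 : y ^ 2 ≤ 1 / 3 := by
        have hsq := sq_le_sq' (le_of_lt hy.1) (le_of_lt hy.2)
        have hinv : ((Real.sqrt 3)⁻¹) ^ 2 = 1 / 3 := by
          rw [inv_pow, hs3]; norm_num
        linarith [hsq.trans_eq hinv]
      have hden : 0 < 1 + y ^ 2 := by positivity
      rw [sub_nonneg, le_div_iff₀ hden]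
      nlinarith
  have hmem1 : -(Real.sqrt 3)⁻¹ ∈ Set.Icc (-(Real.sqrt 3)⁻¹) ((Real.sqrt 3)⁻¹) := by
    constructor
    · exact le_refl _
    · have : 0 < (Real.sqrt 3)⁻¹ := by positivity
      linarith
  have hmem2 : x ∈ Set.Icc (-(Real.sqrt 3)⁻¹) ((Real.sqrt 3)⁻¹) := ⟨h1, h2⟩
  have hm := hmono hmem1 hmem2 h1
  have harc : Real.arctan (-(Real.sqrt 3)⁻¹) = -(Real.pi / 6) := by
    rw [Real.arctan_neg, arctan_inv_sqrt3]
  have hinv : (Real.sqrt 3)⁻¹ = Real.sqrt 3 / 3 := by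
    field_simp
    exact hs3.symm
  simp only [hf, harc] at hm
  rw [hinv] at hm
  nlinarith

/-- For `τ > 0`, `0 < a` with `τa ≤ 1`, the deformed box energy level
is bounded above by the undeformed one:
`3n²π²τ²ħ²/(8m(arctan((2τa−1)/√3)+π/6)²) ≤ n²π²ħ²/(2ma²)`. -/
theorem deformed_energy_le_box_energy (τ a hbar m : ℝ) (n : ℕ)
    (hτ : 0 < τ) (ha : 0 < a) (hτa : τ * a ≤ 1)
    (hhbar : 0 < hbar) (hm : 0 < m) (hn : 0 < n) :
    3 * (n : ℝ) ^ 2 * Real.pi ^ 2 * τ ^ 2 * hbar ^ 2 /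
        (8 * m * (Real.arctan ((2 * τ * a - 1) / Real.sqrt 3) + Real.pi / 6) ^ 2)
      ≤ (n : ℝ) ^ 2 * Real.pi ^ 2 * hbar ^ 2 / (2 * m * a ^ 2) := by
  have hs3 : Real.sqrt 3 ^ 2 = 3 := Real.sq_sqrt (by norm_num)
  have hs3pos : 0 < Real.sqrt 3 := Real.sqrt_pos.mpr (by norm_num)
  set x := (2 * τ * a - 1) / Real.sqrt 3 with hx
  have hta : 0 < τ * a := mul_pos hτ ha
  have hx1 : -(Real.sqrt 3)⁻¹ ≤ x := by
    rw [hx, neg_le, ← neg_div, inv_eq_one_div, div_le_div_iff₀ hs3pos hs3pos]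
    nlinarith
  have hx2 : x ≤ (Real.sqrt 3)⁻¹ := by
    rw [hx, inv_eq_one_div, div_le_div_iff₀ hs3pos hs3pos]
    nlinarith
  have hkey := arctan_tangent_bound x hx1 hx2
  set K := Real.arctan x + Real.pi / 6 with hK
  have hKge : Real.sqrt 3 / 2 * (τ * a) ≤ K := by
    have hxval : 3 / 4 * x + Real.sqrt 3 / 4 = Real.sqrt 3 / 2 * (τ * a) := by
      rw [hx]
      field_simp
      nlinarith
    rw [hK]
    nlinarith
  have hKpos : 0 < K := lt_of_lt_of_le (by positivity) hKge
  have hK2 : 3 / 4 * (τ * a) ^ 2 ≤ K ^ 2 := by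
    have hc : (0:ℝ) ≤ Real.sqrt 3 / 2 * (τ * a) := by positivity
    nlinarith [mul_le_mul hKge hKge hc hKpos.le]
  have hnp : (0:ℝ) < (n:ℝ) ^ 2 := by positivity
  have hpi := Real.pi_pos
  rw [div_le_div_iff₀ (by positivity) (by positivity)]
  have hfin := mul_le_mul_of_nonneg_left hK2
    (show (0:ℝ) ≤ 8 * ((n:ℝ) ^ 2 * Real.pi ^ 2 * hbar ^ 2 * m) by positivity)
  ring_nf at hfin ⊢
  linarith
end
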